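/- For a monoid morphism φ: R → S in a monoidal category V with reflexive coequalizers preserved by functors − ⊗ A, the extension of scalars functor φ_*(M) = M ⊗_R S defines an opcartesian lift of φ in the functor Mod(V) → Mon(V); that is, the unit map M → M ⊗_R S over φ is opcartesian. -/

import Mathlib

/-!
STATEMENT 2: For a monoid morphism `φ : R ⟶ S` in a monoidal category `V` with reflexive
coequalizers preserved by the functors `- ⊗ A`, the extension of scalars `φ_*(M) = M ⊗_R S`
defines an opcartesian lift of `φ` in the functor `Mod(V) ⥤ Mon(V)`; that is, the unit map
`M ⟶ M ⊗_R S` over `φ` is opcartesian.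
-/

open CategoryTheory MonoidalCategory Limits

universe v u

variable {C : Type u} [Category.{v} C] [MonoidalCategory.{v} C]

/-- A right module object over a monoid object in a monoidal category. -/
structure RMod (A : Mon C) : Type max v u where
  X : C
  act : X ⊗ A.X ⟶ X
  one_act : (X ◁ (MonObj.one : 𝟙_ C ⟶ A.X)) ≫ act = (ρ_ X).hom := by aesop_cat
  assoc : (X ◁ (MonObj.mul : A.X ⊗ A.X ⟶ A.X)) ≫ act = (α_ X A.X A.X).inv ≫ (act ▷ A.X) ≫ act := by aesop_cat

/-- The total category `Mod(V)` of pairs `(R, M)`. -/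
structure ModTot (C : Type u) [Category.{v} C] [MonoidalCategory.{v} C] : Type max v u where
  R : Mon C
  M : RMod R

/-- Morphisms in `Mod(V)`. -/
@[ext]
structure ModTotHom (X Y : ModTot C) : Type v where
  φ : X.R ⟶ Y.R
  α : X.M.X ⟶ Y.M.X
  compat : X.M.act ≫ α = (α ⊗ₘ φ.hom) ≫ Y.M.act := by aesop_cat

instance : Category (ModTot C) where
  Hom X Y := ModTotHom X Y
  id X := { φ := 𝟙 X.R, α := 𝟙 X.M.X, compat := by simp }
  comp {X Y Z} f g :=
    { φ := f.φ ≫ g.φ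
      α := f.α ≫ g.α
      compat := by
        rw [Mon.comp_hom', ← tensorHom_comp_tensorHom, Category.assoc, ← g.compat, reassoc_of% f.compat] }
  id_comp f := by apply ModTotHom.ext <;> simp
  comp_id f := by apply ModTotHom.ext <;> simp
  assoc f g h := by apply ModTotHom.ext <;> simp

/-- The forgetful functor `Mod(V) ⥤ Mon(V)`. -/
@[simps]
def modForget (C : Type u) [Category.{v} C] [MonoidalCategory.{v} C] :
    ModTot C ⥤ Mon C where
  obj X := X.R
  map f := f.φ

lemma aux_act {S T : Mon C} (g : S ⟶ T) (N' : RMod T) {X Y : C}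
    (a : X ⟶ N'.X) (u : Y ⟶ T.X) :
    ((a ⊗ₘ u) ≫ N'.act ⊗ₘ g.hom) ≫ N'.act =
      (α_ X Y S.X).hom ≫ (a ⊗ₘ ((u ⊗ₘ g.hom) ≫ (MonObj.mul : T.X ⊗ T.X ⟶ T.X))) ≫ N'.act := by
  have hassoc : (N'.act ▷ T.X) ≫ N'.act = (α_ _ _ _).hom ≫ (N'.X ◁ (MonObj.mul : T.X ⊗ T.X ⟶ T.X)) ≫ N'.act := by
    rw [N'.assoc]; simp
  calc ((a ⊗ₘ u) ≫ N'.act ⊗ₘ g.hom) ≫ N'.act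
      = ((a ⊗ₘ u) ⊗ₘ g.hom) ≫ (N'.act ▷ T.X) ≫ N'.act := by
        rw [← tensorHom_id, tensorHom_comp_tensorHom_assoc, Category.comp_id]
    _ = ((a ⊗ₘ u) ⊗ₘ g.hom) ≫ (α_ _ _ _).hom ≫ (N'.X ◁ (MonObj.mul : T.X ⊗ T.X ⟶ T.X)) ≫ N'.act := by rw [hassoc]
    _ = (α_ X Y S.X).hom ≫ (a ⊗ₘ (u ⊗ₘ g.hom)) ≫ (N'.X ◁ (MonObj.mul : T.X ⊗ T.X ⟶ T.X)) ≫ N'.act := by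
        rw [associator_naturality_assoc]
    _ = (α_ X Y S.X).hom ≫ (a ⊗ₘ ((u ⊗ₘ g.hom) ≫ (MonObj.mul : T.X ⊗ T.X ⟶ T.X))) ≫ N'.act := by
        rw [← id_tensorHom, tensorHom_comp_tensorHom_assoc, Category.comp_id]

lemma aux_w {R S T : Mon C} (φ : R ⟶ S) (g : S ⟶ T) (M : RMod R) (N' : RMod T)
    (a : M.X ⟶ N'.X) (ha : M.act ≫ a = (a ⊗ₘ (φ.hom ≫ g.hom)) ≫ N'.act) :
    (M.act ▷ S.X) ≫ ((a ⊗ₘ g.hom) ≫ N'.act) =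
      ((α_ M.X R.X S.X).hom ≫ (M.X ◁ (φ.hom ▷ S.X)) ≫ (M.X ◁ (MonObj.mul : S.X ⊗ S.X ⟶ S.X))) ≫
        ((a ⊗ₘ g.hom) ≫ N'.act) := by
  calc (M.act ▷ S.X) ≫ (a ⊗ₘ g.hom) ≫ N'.act
      = ((M.act ≫ a) ⊗ₘ g.hom) ≫ N'.act := by
        rw [← tensorHom_id, tensorHom_comp_tensorHom_assoc, Category.id_comp]
    _ = ((a ⊗ₘ (φ.hom ≫ g.hom)) ≫ N'.act ⊗ₘ g.hom) ≫ N'.act := by rw [ha]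
    _ = (α_ M.X R.X S.X).hom ≫ (a ⊗ₘ (((φ.hom ≫ g.hom) ⊗ₘ g.hom) ≫ (MonObj.mul : T.X ⊗ T.X ⟶ T.X))) ≫ N'.act := by
        rw [aux_act]
    _ = ((α_ M.X R.X S.X).hom ≫ (M.X ◁ (φ.hom ▷ S.X)) ≫ (M.X ◁ (MonObj.mul : S.X ⊗ S.X ⟶ S.X))) ≫
          (a ⊗ₘ g.hom) ≫ N'.act := by
        simp only [← id_tensorHom, ← tensorHom_id, Category.assoc, tensorHom_comp_tensorHom_assoc,
          Category.comp_id, Category.id_comp, IsMonHom.mul_hom g.hom]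

lemma aux_refl {R S : Mon C} (φ : R ⟶ S) (M : RMod R) :
    IsReflexivePair (M.act ▷ S.X)
      ((α_ M.X R.X S.X).hom ≫ (M.X ◁ (φ.hom ▷ S.X)) ≫ (M.X ◁ (MonObj.mul : S.X ⊗ S.X ⟶ S.X))) := by
  refine IsReflexivePair.mk' (((ρ_ M.X).inv ≫ (M.X ◁ (MonObj.one : 𝟙_ C ⟶ R.X))) ▷ S.X) ?_ ?_
  · rw [← comp_whiskerRight, Category.assoc, M.one_act]
    simp
  · rw [comp_whiskerRight, Category.assoc, associator_naturality_middle_assoc,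
      ← MonoidalCategory.whiskerLeft_comp_assoc, ← comp_whiskerRight, IsMonHom.one_hom φ.hom]
    rw [← MonoidalCategory.whiskerLeft_comp, MonObj.one_mul S.X]
    simp

/-- let `V` have reflexive coequalizers, preserved by `- ⊗ A` for every `A`.
Let `φ : R ⟶ S` be a monoid morphism and `M` a right `R`-module. Suppose `N` is a right
`S`-module realizing the extension of scalars `M ⊗_R S`: its underlying object is equipped
with a map `π : M ⊗ S ⟶ N` coequalizing the two canonical maps `(M ⊗ R) ⊗ S ⇉ M ⊗ S`
(action of `R` on `M` versus multiplication of `S` via `φ`), which is a (reflexive)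
coequalizer, and through which the `S`-action on `M ⊗ S` descends to the action of `N`.
Then the unit map `M ⟶ M ⊗_R S` (i.e. `(M, R) ⟶ (N, S)` in `Mod(V)`, with components `φ`
and `M ≅ M ⊗ I ⟶ M ⊗ S ⟶ N`) is (strongly) opcartesian over `φ`. -/
theorem statement2 (C : Type u) [Category.{v} C] [MonoidalCategory.{v} C]
    [HasReflexiveCoequalizers C]
    (hpres : ∀ (A : C) ⦃X Y : C⦄ (f g : X ⟶ Y) [IsReflexivePair f g],
      PreservesColimit (parallelPair f g) (tensorRight A))
    {R S : Mon C} (φ : R ⟶ S) (M : RMod R) (N : RMod S)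
    (π : M.X ⊗ S.X ⟶ N.X)
    (h : (M.act ▷ S.X) ≫ π =
      ((α_ M.X R.X S.X).hom ≫ (M.X ◁ (φ.hom ▷ S.X)) ≫ (M.X ◁ (MonObj.mul : S.X ⊗ S.X ⟶ S.X))) ≫ π)
    (hcolim : Nonempty (IsColimit (Cofork.ofπ π h)))
    (hact : (α_ M.X S.X S.X).hom ≫ (M.X ◁ (MonObj.mul : S.X ⊗ S.X ⟶ S.X)) ≫ π = (π ▷ S.X) ≫ N.act)
    (hcompat : M.act ≫ ((ρ_ M.X).inv ≫ (M.X ◁ (MonObj.one : 𝟙_ C ⟶ S.X)) ≫ π) =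
      (((ρ_ M.X).inv ≫ (M.X ◁ (MonObj.one : 𝟙_ C ⟶ S.X)) ≫ π) ⊗ₘ φ.hom) ≫ N.act) :
    (modForget C).IsStronglyCocartesian φ
      (({ φ := φ, α := (ρ_ M.X).inv ≫ (M.X ◁ (MonObj.one : 𝟙_ C ⟶ S.X)) ≫ π, compat := hcompat } :
        ({ R := R, M := M } : ModTot C) ⟶ { R := S, M := N })) := by
  
  obtain ⟨hc⟩ := hcolim
  have hπN : (((ρ_ M.X).inv ≫ (M.X ◁ (MonObj.one : 𝟙_ C ⟶ S.X)) ≫ π) ▷ S.X) ≫ N.act = π := by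
    rw [comp_whiskerRight, comp_whiskerRight, Category.assoc, Category.assoc, ← hact,
      associator_naturality_middle_assoc, ← MonoidalCategory.whiskerLeft_comp_assoc, MonObj.one_mul S.X]
    simp
  have hlift : ∀ {X Y : ModTot C} (f : X ⟶ Y) {g : X.R ⟶ Y.R}, f.φ = g →
      (modForget C).IsHomLift g f :=
    by intro X Y f g hg; subst hg; exact IsHomLift.map (modForget C) f
  refine { toIsHomLift := hlift _ rfl, universal_property' := ?_ }
  intro b' (g : S ⟶ b'.R) φ' _inst
  have hφ' : φ ≫ g = φ'.φ :=
    @CategoryTheory.IsHomLift.eq_of_isHomLift _ _ _ _ (modForget C) _ _ (φ ≫ g) φ' _inst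
  have hcomp : M.act ≫ φ'.α = (φ'.α ⊗ₘ (φ.hom ≫ g.hom)) ≫ b'.M.act := by
    rw [φ'.compat, ← hφ', Mon.comp_hom']
  have w := aux_w φ g M b'.M φ'.α hcomp
  set χα := Cofork.IsColimit.desc hc ((φ'.α ⊗ₘ g.hom) ≫ b'.M.act) w with hχα
  have hfac : π ≫ χα = (φ'.α ⊗ₘ g.hom) ≫ b'.M.act :=
    Cofork.IsColimit.π_desc' hc _ w
  -- π ▷ S.X is an epi
  have hrefl : IsReflexivePair (M.act ▷ S.X)
      ((α_ M.X R.X S.X).hom ≫ (M.X ◁ (φ.hom ▷ S.X)) ≫ (M.X ◁ (MonObj.mul : S.X ⊗ S.X ⟶ S.X))) := aux_refl φ M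
  have hpc := hpres S.X (M.act ▷ S.X)
    ((α_ M.X R.X S.X).hom ≫ (M.X ◁ (φ.hom ▷ S.X)) ≫ (M.X ◁ (MonObj.mul : S.X ⊗ S.X ⟶ S.X)))
  have hc2 := isColimitCoforkMapOfIsColimit (tensorRight S.X) h hc
  have hepi2 : Epi (π ▷ S.X) := by
    have := epi_of_isColimit_cofork hc2
    simpa using this
  have hπepi : Epi π := by
    have := epi_of_isColimit_cofork hc
    simpa using this
  -- compatibility for χ
  have hχcomp : N.act ≫ χα = (χα ⊗ₘ g.hom) ≫ b'.M.act := by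
    rw [← cancel_epi (π ▷ S.X)]
    calc (π ▷ S.X) ≫ N.act ≫ χα
        = (α_ M.X S.X S.X).hom ≫ (M.X ◁ (MonObj.mul : S.X ⊗ S.X ⟶ S.X)) ≫ π ≫ χα := by
          rw [← Category.assoc, ← hact]; simp
      _ = (α_ M.X S.X S.X).hom ≫ (M.X ◁ (MonObj.mul : S.X ⊗ S.X ⟶ S.X)) ≫ (φ'.α ⊗ₘ g.hom) ≫ b'.M.act := by rw [hfac]
      _ = (α_ M.X S.X S.X).hom ≫ (φ'.α ⊗ₘ ((MonObj.mul : S.X ⊗ S.X ⟶ S.X) ≫ g.hom)) ≫ b'.M.act := by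
          rw [← id_tensorHom, tensorHom_comp_tensorHom_assoc, Category.id_comp]
      _ = (α_ M.X S.X S.X).hom ≫ (φ'.α ⊗ₘ ((g.hom ⊗ₘ g.hom) ≫ (MonObj.mul : b'.R.X ⊗ b'.R.X ⟶ b'.R.X))) ≫ b'.M.act := by
          have hmul : (MonObj.mul : S.X ⊗ S.X ⟶ S.X) ≫ g.hom = (g.hom ⊗ₘ g.hom) ≫ (MonObj.mul : b'.R.X ⊗ b'.R.X ⟶ b'.R.X) := IsMonHom.mul_hom g.hom
          rw [hmul]
      _ = ((φ'.α ⊗ₘ g.hom) ≫ b'.M.act ⊗ₘ g.hom) ≫ b'.M.act := (aux_act g b'.M φ'.α g.hom).symm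
      _ = (π ▷ S.X) ≫ (χα ⊗ₘ g.hom) ≫ b'.M.act := by
          rw [← tensorHom_id π, tensorHom_comp_tensorHom_assoc, Category.id_comp, hfac]
  refine ⟨{ φ := g, α := χα, compat := hχcomp }, ⟨hlift _ rfl, ?_⟩, ?_⟩
  · apply ModTotHom.ext
    · exact hφ'
    · show ((ρ_ M.X).inv ≫ (M.X ◁ (MonObj.one : 𝟙_ C ⟶ S.X)) ≫ π) ≫ χα = φ'.α
      have hone : (MonObj.one : 𝟙_ C ⟶ S.X) ≫ g.hom = (MonObj.one : 𝟙_ C ⟶ b'.R.X) := IsMonHom.one_hom g.hom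
      rw [Category.assoc, Category.assoc, hfac, ← id_tensorHom, tensorHom_comp_tensorHom_assoc,
        Category.id_comp, hone, MonoidalCategory.tensorHom_def, Category.assoc, b'.M.one_act]
      simp
  · rintro χ' ⟨hl, hfac'⟩
    have hg : g = χ'.φ :=
      @CategoryTheory.IsHomLift.eq_of_isHomLift _ _ _ _ (modForget C) { R := S, M := N } b' g χ' hl
    have hα'eq : ((ρ_ M.X).inv ≫ (M.X ◁ (MonObj.one : 𝟙_ C ⟶ S.X)) ≫ π) ≫ χ'.α = φ'.α :=
      congrArg ModTotHom.α hfac'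
    apply ModTotHom.ext
    · exact hg.symm
    · show χ'.α = χα
      apply Cofork.IsColimit.hom_ext hc
      show Cofork.π _ ≫ _ = Cofork.π _ ≫ _
      rw [Cofork.π_ofπ]
      show π ≫ χ'.α = π ≫ χα
      rw [hfac]
      calc π ≫ χ'.α
          = ((((ρ_ M.X).inv ≫ (M.X ◁ (MonObj.one : 𝟙_ C ⟶ S.X)) ≫ π)) ▷ S.X) ≫ N.act ≫ χ'.α := by
            rw [← Category.assoc, hπN]
        _ = ((((ρ_ M.X).inv ≫ (M.X ◁ (MonObj.one : 𝟙_ C ⟶ S.X)) ≫ π)) ▷ S.X) ≫ (χ'.α ⊗ₘ χ'.φ.hom) ≫ b'.M.act := by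
            rw [χ'.compat]
        _ = (((((ρ_ M.X).inv ≫ (M.X ◁ (MonObj.one : 𝟙_ C ⟶ S.X)) ≫ π)) ≫ χ'.α) ⊗ₘ χ'.φ.hom) ≫ b'.M.act := by
            rw [← tensorHom_id, tensorHom_comp_tensorHom_assoc, Category.id_comp]
        _ = (φ'.α ⊗ₘ g.hom) ≫ b'.M.act := by rw [hα'eq, ← hg]
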